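/- arXiv:1707.08345 — 5 statements merged into one kernel-verified Lean document; each statement's English description precedes it below -/
import Mathlib

section
/- For every real β with 1/2 < β < 1 and every integer l with l ≥ 2, the fourth-difference expression f_β(l) = (l+2)^(3-2β) - 4(l+1)^(3-2β) + 6·l^(3-2β) - 4(l-1)^(3-2β) + (l-2)^(3-2β) is strictly positive. -/
open Set Real Filter

private lemma hd_shift (p c : ℝ) {x : ℝ} (h : x + c ≠ 0) :
    HasDerivAt (fun y : ℝ => (y + c) ^ p) (p * (x + c) ^ (p - 1)) x := by
  have h1 : HasDerivAt (fun y : ℝ => y + c) 1 x := (hasDerivAt_id x).add_const c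
  have h2 := (Real.hasDerivAt_rpow_const (x := x + c) (p := p) (Or.inl h)).comp x h1
  simpa [Function.comp_def] using h2

private lemma strictConvexOn_rpow_neg {q : ℝ} (hq : q < 0) :
    StrictConvexOn ℝ (Ioi (0:ℝ)) fun x : ℝ => x ^ q := by
  apply strictConvexOn_of_deriv2_pos (convex_Ioi 0)
  · exact fun x hx =>
      (Real.continuousAt_rpow_const x q (Or.inl (ne_of_gt hx))).continuousWithinAt
  · intro x hx
    rw [interior_Ioi] at hx
    have hx0 : x ≠ 0 := ne_of_gt hx
    have e1 : deriv (fun y : ℝ => y ^ q) =ᶠ[nhds x] fun y => q * y ^ (q - 1) := by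
      filter_upwards [eventually_ne_nhds hx0] with y hy
      exact Real.deriv_rpow_const y q
    have e2 : deriv (deriv (fun y : ℝ => y ^ q)) x = q * ((q - 1) * x ^ (q - 1 - 1)) := by
      rw [e1.deriv_eq]
      exact ((Real.hasDerivAt_rpow_const (x := x) (p := q - 1) (Or.inl hx0)).const_mul q).deriv
    have : (deriv^[2] (fun y : ℝ => y ^ q)) x = q * ((q - 1) * x ^ (q - 1 - 1)) := by
      simpa [Function.iterate_succ, Function.comp] using e2
    rw [this]
    have hxp : (0:ℝ) < x ^ (q - 1 - 1) := Real.rpow_pos_of_pos hx _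
    have : (q - 1) * x ^ (q - 1 - 1) < 0 := mul_neg_of_neg_of_pos (by linarith) hxp
    exact mul_pos_of_neg_of_neg hq this

private lemma second_diff_pos {q : ℝ} (hq : q < 0) {x : ℝ} (hx : 1 < x) :
    2 * x ^ q < (x - 1) ^ q + (x + 1) ^ q := by
  have h := (strictConvexOn_rpow_neg hq).2 (show x - 1 ∈ Ioi (0:ℝ) by simp; linarith)
    (show x + 1 ∈ Ioi (0:ℝ) by simp; linarith) (by intro h; linarith [h])
    (by norm_num : (0:ℝ) < 1/2) (by norm_num : (0:ℝ) < 1/2) (by norm_num)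
  simp only [smul_eq_mul] at h
  have e : (1/2) * (x - 1) + (1/2) * (x + 1) = x := by ring
  rw [e] at h
  linarith

private lemma strictConvexOn_g {p : ℝ} (hp1 : 1 < p) (hp2 : p < 2) :
    StrictConvexOn ℝ (Ici (1:ℝ))
      (fun y : ℝ => (y + 1) ^ p - 2 * y ^ p + (y - 1) ^ p) := by
  apply strictConvexOn_of_deriv2_pos (convex_Ici 1)
  · intro x _
    have c1 : ContinuousAt (fun y : ℝ => (y + 1) ^ p) x :=
      (Real.continuousAt_rpow_const _ _ (Or.inr (by linarith))).comp
        (continuous_id.add continuous_const).continuousAt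
    have c2 : ContinuousAt (fun y : ℝ => y ^ p) x :=
      Real.continuousAt_rpow_const _ _ (Or.inr (by linarith))
    have c3 : ContinuousAt (fun y : ℝ => (y - 1) ^ p) x :=
      (Real.continuousAt_rpow_const _ _ (Or.inr (by linarith))).comp
        (continuous_id.sub continuous_const).continuousAt
    exact ((c1.sub (c2.const_mul 2)).add c3).continuousWithinAt
  · intro x hx
    rw [interior_Ici, mem_Ioi] at hx
    -- first derivative on Ioi 1
    have hder : ∀ y ∈ Ioi (1:ℝ),
        HasDerivAt (fun y : ℝ => (y + 1) ^ p - 2 * y ^ p + (y - 1) ^ p)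
          (p * (y + 1) ^ (p - 1) - 2 * (p * y ^ (p - 1)) + p * (y - 1) ^ (p - 1)) y := by
      intro y hy
      rw [mem_Ioi] at hy
      have d1 : HasDerivAt (fun y : ℝ => (y + 1) ^ p) (p * (y + 1) ^ (p - 1)) y :=
        hd_shift p 1 (by linarith)
      have d2 : HasDerivAt (fun y : ℝ => y ^ p) (p * y ^ (p - 1)) y :=
        Real.hasDerivAt_rpow_const (Or.inl (by linarith))
      have d3 : HasDerivAt (fun y : ℝ => (y - 1) ^ p) (p * (y - 1) ^ (p - 1)) y := by
        have := hd_shift p (-1) (x := y) (by intro h; nlinarith [h])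
        simpa [sub_eq_add_neg] using this
      exact (d1.sub (d2.const_mul 2)).add d3
    have e1 : deriv (fun y : ℝ => (y + 1) ^ p - 2 * y ^ p + (y - 1) ^ p) =ᶠ[nhds x]
        fun y => p * (y + 1) ^ (p - 1) - 2 * (p * y ^ (p - 1)) + p * (y - 1) ^ (p - 1) := by
      filter_upwards [Ioi_mem_nhds hx] with y hy
      exact (hder y hy).deriv
    have d1 : HasDerivAt (fun y : ℝ => p * (y + 1) ^ (p - 1))
        (p * ((p - 1) * (x + 1) ^ (p - 1 - 1))) x :=
      (hd_shift (p - 1) 1 (by linarith)).const_mul p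
    have d2 : HasDerivAt (fun y : ℝ => p * y ^ (p - 1))
        (p * ((p - 1) * x ^ (p - 1 - 1))) x :=
      (Real.hasDerivAt_rpow_const (Or.inl (by linarith : x ≠ 0))).const_mul p
    have d3 : HasDerivAt (fun y : ℝ => p * (y - 1) ^ (p - 1))
        (p * ((p - 1) * (x - 1) ^ (p - 1 - 1))) x := by
      have := (hd_shift (p - 1) (-1) (x := x) (by intro h; nlinarith [h])).const_mul p
      simpa [sub_eq_add_neg] using this
    have e2 : (deriv^[2] (fun y : ℝ => (y + 1) ^ p - 2 * y ^ p + (y - 1) ^ p)) x =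
        p * ((p - 1) * (x + 1) ^ (p - 1 - 1)) - 2 * (p * ((p - 1) * x ^ (p - 1 - 1)))
          + p * ((p - 1) * (x - 1) ^ (p - 1 - 1)) := by
      have := ((d1.sub (d2.const_mul 2)).add d3).deriv
      simp only [Function.iterate_succ, Function.iterate_zero, Function.comp, id]
      rw [e1.deriv_eq]
      convert this using 2
      rfl
    rw [e2]
    have hsd : 2 * x ^ (p - 1 - 1) < (x - 1) ^ (p - 1 - 1) + (x + 1) ^ (p - 1 - 1) :=
      second_diff_pos (by linarith) (by exact hx)
    have hpp : 0 < p * (p - 1) := mul_pos (by linarith) (by linarith)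
    nlinarith [hsd, hpp]

/-- For β ∈ (1/2,1) and integer l ≥ 2, the fourth difference
(l+2)^(3-2β) - 4(l+1)^(3-2β) + 6 l^(3-2β) - 4(l-1)^(3-2β) + (l-2)^(3-2β) is positive. -/
theorem stmt_3 (β : ℝ) (hβ : β ∈ Set.Ioo (1/2 : ℝ) 1) (l : ℤ) (hl : 2 ≤ l) :
    ((l : ℝ) + 2) ^ (3 - 2 * β) - 4 * ((l : ℝ) + 1) ^ (3 - 2 * β)
      + 6 * (l : ℝ) ^ (3 - 2 * β) - 4 * ((l : ℝ) - 1) ^ (3 - 2 * β)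
      + ((l : ℝ) - 2) ^ (3 - 2 * β) > 0 := by
  obtain ⟨hβ1, hβ2⟩ := hβ
  set p : ℝ := 3 - 2 * β with hp
  have hp1 : 1 < p := by simp [hp]; linarith
  have hp2 : p < 2 := by simp [hp]; linarith
  have hL : (2:ℝ) ≤ (l:ℝ) := by exact_mod_cast hl
  have hg := strictConvexOn_g hp1 hp2
  have ha : (l:ℝ) - 1 ∈ Ici (1:ℝ) := by simp; linarith
  have hb : (l:ℝ) + 1 ∈ Ici (1:ℝ) := by simp; linarith
  have hab : (l:ℝ) - 1 ≠ (l:ℝ) + 1 := by intro h; linarith [h]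
  have h := hg.2 ha hb hab (by norm_num : (0:ℝ) < 1/2) (by norm_num : (0:ℝ) < 1/2)
    (by norm_num)
  simp only [smul_eq_mul] at h
  have e : (1/2) * ((l:ℝ) - 1) + (1/2) * ((l:ℝ) + 1) = (l:ℝ) := by ring
  rw [e] at h
  have b1 : ((l:ℝ) - 1) + 1 = (l:ℝ) := by ring
  have b2 : ((l:ℝ) - 1) - 1 = (l:ℝ) - 2 := by ring
  have b3 : ((l:ℝ) + 1) + 1 = (l:ℝ) + 2 := by ring
  have b4 : ((l:ℝ) + 1) - 1 = (l:ℝ) := by ring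
  rw [b1, b2, b3, b4] at h
  linarith
end

section
/- Let β ∈ (1/2, 1) and h ∈ (0, 1/7]. Then -1 + 3(1-h)^(3-2β) - 3(1-2h)^(3-2β) + (1-3h)^(3-2β) > 0. -/
/-- For β ∈ (1/2,1) and h ∈ (0,1/7]: -1 + 3(1-h)^(3-2β) - 3(1-2h)^(3-2β) + (1-3h)^(3-2β) > 0. -/
theorem stmt_6 (β h : ℝ) (hβ : β ∈ Set.Ioo (1/2 : ℝ) 1)
    (hh : h ∈ Set.Ioc (0 : ℝ) (1/7)) :
    -1 + 3 * (1 - h) ^ (3 - 2 * β) - 3 * (1 - 2 * h) ^ (3 - 2 * β)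
      + (1 - 3 * h) ^ (3 - 2 * β) > 0 := by
  obtain ⟨hβ1, hβ2⟩ := hβ
  obtain ⟨hh1, hh2⟩ := hh
  set p : ℝ := 3 - 2 * β with hpdef
  have hp1 : 1 < p := by simp only [hpdef]; linarith
  have hp2 : p < 2 := by simp only [hpdef]; linarith
  set g : ℝ → ℝ := fun x => (x + h) ^ p - x ^ p with hgdef
  -- derivative of g on Ioi 0
  have hg' : ∀ x ∈ Set.Ioi (0:ℝ), HasDerivAt g (p * (x + h) ^ (p-1) - p * x ^ (p-1)) x := by
    intro x hx
    have hx0 : (0:ℝ) < x := hx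
    have h1 : HasDerivAt (fun y : ℝ => (y + h) ^ p) (1 * p * (x + h) ^ (p-1)) x :=
      HasDerivAt.rpow_const ((hasDerivAt_id x).add_const h) (Or.inr hp1.le)
    have h2 : HasDerivAt (fun y : ℝ => y ^ p) (p * x ^ (p-1)) x :=
      Real.hasDerivAt_rpow_const (Or.inr hp1.le)
    simpa using h1.fun_sub h2
  have hEq : Set.EqOn (deriv g) (fun x => p * (x + h) ^ (p-1) - p * x ^ (p-1)) (Set.Ioi 0) :=
    fun x hx => (hg' x hx).deriv
  have key : StrictConcaveOn ℝ (Set.Ioi (0:ℝ)) g := by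
    apply strictConcaveOn_of_deriv2_neg (convex_Ioi 0)
    · exact fun x hx => ((hg' x hx).continuousAt).continuousWithinAt
    · intro x hx
      rw [interior_Ioi] at hx
      have hx0 : (0:ℝ) < x := hx
      have hxh : (0:ℝ) < x + h := by linarith
      have hEq' : deriv g =ᶠ[nhds x] (fun x => p * (x + h) ^ (p-1) - p * x ^ (p-1)) :=
        Filter.eventuallyEq_of_mem (isOpen_Ioi.mem_nhds hx) hEq
      have hd2 : deriv^[2] g x = deriv (fun x => p * (x + h) ^ (p-1) - p * x ^ (p-1)) x := by
        show deriv (deriv g) x = _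
        exact hEq'.deriv_eq
      rw [hd2]
      have d1 : HasDerivAt (fun y : ℝ => p * (y + h) ^ (p-1))
          (p * (1 * (p-1) * (x + h) ^ (p-1-1))) x :=
        (HasDerivAt.rpow_const ((hasDerivAt_id x).add_const h) (Or.inl hxh.ne')).const_mul p
      have d2 : HasDerivAt (fun y : ℝ => p * y ^ (p-1)) (p * ((p-1) * x ^ (p-1-1))) x :=
        (Real.hasDerivAt_rpow_const (Or.inl hx0.ne')).const_mul p
      rw [(d1.fun_sub d2).deriv]
      have hlt : (x + h) ^ (p-1-1) < x ^ (p-1-1) :=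
        Real.rpow_lt_rpow_of_neg hx0 (by linarith) (by linarith)
      have hpp : 0 < p * (p - 1) := mul_pos (by linarith) (by linarith)
      nlinarith [hpp, hlt]
  have ha : (1 - 3*h) ∈ Set.Ioi (0:ℝ) := by simp; linarith
  have hc : (1 - h) ∈ Set.Ioi (0:ℝ) := by simp; linarith
  have hne : (1 - 3*h) ≠ (1 - h) := by intro hcon; linarith
  have hmid := key.2 ha hc hne (by norm_num : (0:ℝ) < 1/2) (by norm_num : (0:ℝ) < 1/2)
    (by norm_num)
  simp only [smul_eq_mul] at hmid
  rw [show (1/2 : ℝ) * (1 - 3*h) + 1/2 * (1 - h) = 1 - 2*h by ring] at hmid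
  simp only [hgdef] at hmid
  rw [show (1 - 3*h) + h = 1 - 2*h by ring, show (1 - 2*h) + h = 1 - h by ring,
    show (1 - h) + h = 1 by ring, Real.one_rpow] at hmid
  linarith
end

section
/- Let S be the damped-Jacobi iteration matrix S = I - ωD^{-1}C for a symmetric positive definite matrix C with diagonal D, and suppose ρ(D^{-1}C) ≤ η and 0 < ω < 2/η. Then for every error vector e, ⟨C·Se, Se⟩ ≤ ⟨Ce, e⟩ - ω(2 - ωη)·⟨D^{-1}Ce, Ce⟩. -/
open Matrix

lemma aux_spec_mem {n : ℕ} (A : Matrix (Fin n) (Fin n) ℝ) {μ : ℝ} {v : Fin n → ℝ}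
    (hv : v ≠ 0) (h : A *ᵥ v = μ • v) :
    (μ : ℂ) ∈ spectrum ℂ (A.map (fun x : ℝ => (x : ℂ))) := by
  rw [← AlgEquiv.spectrum_eq (Matrix.toLinAlgEquiv' (R := ℂ) (n := Fin n)),
    ← Module.End.hasEigenvalue_iff_mem_spectrum]
  apply Module.End.hasEigenvalue_of_hasEigenvector (x := fun i => (v i : ℂ))
  constructor
  · rw [Module.End.mem_eigenspace_iff, Matrix.toLinAlgEquiv'_apply]
    funext i
    have := congrFun h i
    have h2 : ((A.map fun x : ℝ => (x:ℂ)) *ᵥ fun i => (v i : ℂ)) i = (((A *ᵥ v) i : ℝ) : ℂ) :=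
      (RingHom.map_mulVec Complex.ofRealHom A v i).symm
    simp only [Pi.smul_apply, smul_eq_mul] at this ⊢
    rw [h2, this]
    push_cast
    ring
  · intro h0
    apply hv
    funext i
    have := congrFun h0 i
    simpa using this

lemma aux_qform {n : ℕ} {M : Matrix (Fin n) (Fin n) ℝ} (hM : M.IsHermitian) (η : ℝ)
    (hspec : ∀ μ ∈ spectrum ℝ M, |μ| ≤ η) :
    ∀ x : Fin n → ℝ, M *ᵥ x ⬝ᵥ x ≤ η * (x ⬝ᵥ x) := by
  have hB : (η • (1 : Matrix (Fin n) (Fin n) ℝ) - M).IsHermitian := by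
    refine Matrix.IsHermitian.sub ?_ hM
    unfold Matrix.IsHermitian
    rw [conjTranspose_smul, isHermitian_one.eq]
    simp
  have hpos : (η • (1 : Matrix (Fin n) (Fin n) ℝ) - M).PosSemidef := by
    apply hB.posSemidef_iff_eigenvalues_nonneg.mpr
    intro i
    have hmem := hB.eigenvalues_mem_spectrum_real i
    set ν := hB.eigenvalues i with hν
    have hms : η - ν ∈ spectrum ℝ M := by
      rw [spectrum.mem_iff] at hmem ⊢
      intro hUnit
      apply hmem
      have := hUnit.neg
      convert this using 1
      rw [Algebra.algebraMap_eq_smul_one, Algebra.algebraMap_eq_smul_one, sub_smul]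
      abel
    have := abs_le.mp (hspec _ hms)
    rw [Pi.zero_apply]
    linarith [this.2]
  intro x
  have h0 := hpos.dotProduct_mulVec_nonneg x
  have hstar : star x = x := rfl
  rw [hstar, Matrix.sub_mulVec, Matrix.smul_mulVec, Matrix.one_mulVec,
    dotProduct_sub, dotProduct_smul] at h0
  have hc : x ⬝ᵥ (M *ᵥ x) = M *ᵥ x ⬝ᵥ x := dotProduct_comm _ _
  rw [hc] at h0
  simp only [smul_eq_mul] at h0
  linarith

/-- Smoothing property of damped Jacobi: for S = I - ωD⁻¹C with C symmetric positive
definite, D = diag(C), ρ(D⁻¹C) ≤ η and 0 < ω < 2/η, we have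
⟨C Se, Se⟩ ≤ ⟨Ce, e⟩ - ω(2 - ωη)⟨D⁻¹Ce, Ce⟩ for all e. -/
theorem stmt_15 (n : ℕ) (C : Matrix (Fin n) (Fin n) ℝ) (hC : C.PosDef)
    (D : Matrix (Fin n) (Fin n) ℝ) (hD : D = Matrix.diagonal fun i => C i i)
    (η ω : ℝ) (hη : 0 < η)
    (hρ : ∀ μ ∈ spectrum ℂ ((D⁻¹ * C).map (fun x : ℝ => (x : ℂ))), ‖μ‖ ≤ η)
    (hω : 0 < ω) (hω2 : ω < 2 / η)
    (S : Matrix (Fin n) (Fin n) ℝ) (hS : S = 1 - ω • (D⁻¹ * C)) :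
    ∀ e : Fin n → ℝ,
      C.mulVec (S.mulVec e) ⬝ᵥ S.mulVec e ≤
        C.mulVec e ⬝ᵥ e - ω * (2 - ω * η) * (D⁻¹.mulVec (C.mulVec e) ⬝ᵥ C.mulVec e) := by
  -- diagonal entries are positive
  have hd : ∀ i, 0 < C i i := by
    intro i
    have h1 := hC.dotProduct_mulVec_pos (x := Pi.single i 1) (by
      intro h
      have := congrFun h i
      simp at this)
    have hstar : star (Pi.single i 1 : Fin n → ℝ) = Pi.single i 1 := rfl
    rw [hstar] at h1
    have heq : Pi.single i 1 ⬝ᵥ C *ᵥ Pi.single i 1 = C i i := by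
      simp [dotProduct, Matrix.mulVec_single, Pi.single_apply, ite_mul]
    rwa [heq] at h1
  set e' : Fin n → ℝ := fun i => Real.sqrt (C i i) with he'def
  have he' : ∀ i, 0 < e' i := fun i => Real.sqrt_pos.mpr (hd i)
  have he'sq : ∀ i, e' i * e' i = C i i := fun i => Real.mul_self_sqrt (hd i).le
  set E : Matrix (Fin n) (Fin n) ℝ := Matrix.diagonal e' with hEdef
  set Einv : Matrix (Fin n) (Fin n) ℝ := Matrix.diagonal (fun i => (e' i)⁻¹) with hEinvdef
  have hEinvE : Einv * E = 1 := by
    rw [hEinvdef, hEdef, Matrix.diagonal_mul_diagonal, ← Matrix.diagonal_one]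
    exact congrArg Matrix.diagonal (funext fun i => inv_mul_cancel₀ (he' i).ne')
  have hEEinv : E * Einv = 1 := by
    rw [hEinvdef, hEdef, Matrix.diagonal_mul_diagonal, ← Matrix.diagonal_one]
    exact congrArg Matrix.diagonal (funext fun i => mul_inv_cancel₀ (he' i).ne')
  have hDinv : D⁻¹ = Einv * Einv := by
    apply Matrix.inv_eq_right_inv
    rw [hD, hEinvdef, Matrix.diagonal_mul_diagonal, Matrix.diagonal_mul_diagonal,
      ← Matrix.diagonal_one]
    refine congrArg Matrix.diagonal (funext fun i => ?_)
    rw [← he'sq i]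
    have hne : e' i ≠ 0 := (he' i).ne'
    field_simp
  set M : Matrix (Fin n) (Fin n) ℝ := Einv * C * Einv with hMdef
  have hM : M.IsHermitian := by
    have hE' : Einvᴴ = Einv := by
      rw [hEinvdef, Matrix.diagonal_conjTranspose]
      congr 1
    unfold Matrix.IsHermitian
    rw [hMdef, Matrix.conjTranspose_mul, Matrix.conjTranspose_mul, hE', hC.1.eq, Matrix.mul_assoc]
  have hfact : D⁻¹ * C = Einv * M * E := by
    rw [hDinv, hMdef]
    simp only [Matrix.mul_assoc]
    rw [hEinvE, Matrix.mul_one]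
  have key1 : ∀ μ ∈ spectrum ℝ M, |μ| ≤ η := by
    intro μ hμ
    have hEig : Module.End.HasEigenvalue (Matrix.toLinAlgEquiv' M) μ := by
      rw [Module.End.hasEigenvalue_iff_mem_spectrum, AlgEquiv.spectrum_eq]
      exact hμ
    obtain ⟨v, hv1, hv2⟩ := hEig.exists_hasEigenvector
    have hv1' : M *ᵥ v = μ • v := by
      have := Module.End.mem_eigenspace_iff.mp hv1
      rwa [Matrix.toLinAlgEquiv'_apply] at this
    set u := Einv *ᵥ v with hudef
    have hu : (D⁻¹ * C) *ᵥ u = μ • u := by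
      rw [hfact, hudef, Matrix.mulVec_mulVec, Matrix.mul_assoc (Einv * M) E Einv, hEEinv,
        Matrix.mul_one, ← Matrix.mulVec_mulVec, hv1', Matrix.mulVec_smul]
    have hu0 : u ≠ 0 := by
      intro h0
      apply hv2
      have hv' : E *ᵥ u = v := by
        rw [hudef, Matrix.mulVec_mulVec, hEEinv, Matrix.one_mulVec]
      rw [h0, Matrix.mulVec_zero] at hv'
      exact hv'.symm
    have hmem := aux_spec_mem (D⁻¹ * C) hu0 hu
    have := hρ _ hmem
    rwa [Complex.norm_real, Real.norm_eq_abs] at this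
  have key3 := aux_qform hM η key1
  -- quadratic form comparison  C ≤ η D
  have key4 : ∀ z : Fin n → ℝ, C *ᵥ z ⬝ᵥ z ≤ η * (D *ᵥ z ⬝ᵥ z) := by
    intro z
    have h := key3 (E *ᵥ z)
    have h1 : M *ᵥ (E *ᵥ z) = Einv *ᵥ (C *ᵥ z) := by
      rw [Matrix.mulVec_mulVec, hMdef, Matrix.mul_assoc (Einv * C) Einv E, hEinvE,
        Matrix.mul_one, ← Matrix.mulVec_mulVec]
    have h2 : Einv *ᵥ (C *ᵥ z) ⬝ᵥ (E *ᵥ z) = C *ᵥ z ⬝ᵥ z := by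
      rw [hEinvdef, hEdef]
      simp only [dotProduct, Matrix.mulVec_diagonal]
      apply Finset.sum_congr rfl
      intro i _
      have hne : e' i ≠ 0 := (he' i).ne'
      field_simp
    have h3 : (E *ᵥ z) ⬝ᵥ (E *ᵥ z) = D *ᵥ z ⬝ᵥ z := by
      rw [hD, hEdef]
      simp only [dotProduct, Matrix.mulVec_diagonal]
      apply Finset.sum_congr rfl
      intro i _
      rw [← he'sq i]
      ring
    rw [h1, h2, h3] at h
    exact h
  intro ev
  have hdet : IsUnit D.det := by
    rw [hD, Matrix.det_diagonal]
    exact (Finset.prod_pos (fun i _ => hd i)).ne'.isUnit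
  set y := C *ᵥ ev with hydef
  set z := D⁻¹ *ᵥ y with hzdef
  have hDz : D *ᵥ z = y := by
    rw [hzdef, Matrix.mulVec_mulVec, Matrix.mul_nonsing_inv D hdet, Matrix.one_mulVec]
  have hSe : S *ᵥ ev = ev - ω • z := by
    rw [hS, Matrix.sub_mulVec, Matrix.one_mulVec, Matrix.smul_mulVec,
      ← Matrix.mulVec_mulVec, ← hydef, ← hzdef]
  have hCt : Cᵀ = C := hC.1.eq
  have hsym : (C *ᵥ z) ⬝ᵥ ev = z ⬝ᵥ y := by
    rw [dotProduct_comm, Matrix.dotProduct_mulVec, ← Matrix.mulVec_transpose, hCt, hydef,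
      dotProduct_comm]
  have hkey : (C *ᵥ z) ⬝ᵥ z ≤ η * (z ⬝ᵥ y) := by
    have h := key4 z
    rw [hDz, dotProduct_comm y z] at h
    exact h
  have hω2' : ω * ω * ((C *ᵥ z) ⬝ᵥ z) ≤ ω * ω * (η * (z ⬝ᵥ y)) :=
    mul_le_mul_of_nonneg_left hkey (mul_self_nonneg ω)
  rw [hSe, Matrix.mulVec_sub, Matrix.mulVec_smul, sub_dotProduct, dotProduct_sub,
    dotProduct_sub, smul_dotProduct, dotProduct_smul, dotProduct_smul, smul_dotProduct]
  simp only [smul_eq_mul, ← hydef]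
  have hyz : y ⬝ᵥ z = z ⬝ᵥ y := dotProduct_comm _ _
  rw [hsym, hyz]
  ring_nf
  nlinarith [hω2']
end

section
/- Let M_{h,H} be a two-grid iteration operator of the form M = S(I - P(PᵀCP)^{-1}PᵀC), where C is symmetric positive definite and P has full column rank. Suppose the smoothing property ‖Se‖₁² ≤ ‖e‖₁² - σ₁‖e‖₂² holds for all e, and the approximation property min_{e_c} ‖e - Pe_c‖₀² ≤ σ₂‖e‖₁² holds for all e, where ‖e‖₀² = ⟨De,e⟩, ‖e‖₁² = ⟨Ce,e⟩, ‖e‖₂² = ⟨D^{-1}Ce, Ce⟩, D = diag(C), and σ₂ ≥ σ₁ > 0. Then ‖M_{h,H}‖₁ ≤ √(1 - σ₁/σ₂). -/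
open Matrix

private lemma dot_symm {n : ℕ} (A : Matrix (Fin n) (Fin n) ℝ) (hA : Aᵀ = A)
    (x y : Fin n → ℝ) : A.mulVec x ⬝ᵥ y = A.mulVec y ⬝ᵥ x := by
  rw [dotProduct_comm, dotProduct_mulVec, ← vecMul_transpose, hA]

private lemma psd_nonneg {n : ℕ} (A : Matrix (Fin n) (Fin n) ℝ) (hA : A.PosSemidef)
    (x : Fin n → ℝ) : 0 ≤ A.mulVec x ⬝ᵥ x := by
  have := hA.dotProduct_mulVec_nonneg x
  simpa [dotProduct_comm] using this

private lemma cs_lemma {n : ℕ} (A : Matrix (Fin n) (Fin n) ℝ) (hA : A.PosSemidef)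
    (x y : Fin n → ℝ) :
    (A.mulVec x ⬝ᵥ y) ^ 2 ≤ (A.mulVec x ⬝ᵥ x) * (A.mulVec y ⬝ᵥ y) := by
  have hsym : Aᵀ = A := hA.1
  have hq : ∀ t : ℝ, 0 ≤ (A.mulVec x ⬝ᵥ x) * (t * t) + (2 * (A.mulVec x ⬝ᵥ y)) * t
      + (A.mulVec y ⬝ᵥ y) := by
    intro t
    have h0 := psd_nonneg A hA (t • x + y)
    have hexp : A.mulVec (t • x + y) ⬝ᵥ (t • x + y)
        = (A.mulVec x ⬝ᵥ x) * (t * t) + (2 * (A.mulVec x ⬝ᵥ y)) * t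
          + (A.mulVec y ⬝ᵥ y) := by
      simp only [mulVec_add, mulVec_smul, add_dotProduct, smul_dotProduct, dotProduct_add,
        dotProduct_smul, smul_eq_mul]
      linear_combination t * (dot_symm A hsym y x)
    linarith [hexp ▸ h0]
  have hd := discrim_le_zero hq
  rw [discrim] at hd
  nlinarith [hd]

/-- Classical Ruge–Stüben two-grid convergence: if the smoothing property with
constant σ₁ and the approximation property with constant σ₂ ≥ σ₁ > 0 hold, then
the two-grid operator M = S(I - P(PᵀCP)⁻¹PᵀC) satisfies ‖Me‖₁² ≤ (1 - σ₁/σ₂)‖e‖₁²,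
i.e. ‖M‖₁ ≤ √(1 - σ₁/σ₂). -/
theorem stmt_16 (n m : ℕ) (C : Matrix (Fin n) (Fin n) ℝ) (hC : C.PosDef)
    (D : Matrix (Fin n) (Fin n) ℝ) (hD : D = Matrix.diagonal fun i => C i i)
    (P : Matrix (Fin n) (Fin m) ℝ) (hP : Function.Injective P.mulVec)
    (S : Matrix (Fin n) (Fin n) ℝ) (σ₁ σ₂ : ℝ) (hσ₁ : 0 < σ₁) (hσ : σ₁ ≤ σ₂)
    (hsmooth : ∀ e : Fin n → ℝ,
      C.mulVec (S.mulVec e) ⬝ᵥ S.mulVec e ≤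
        C.mulVec e ⬝ᵥ e - σ₁ * (D⁻¹.mulVec (C.mulVec e) ⬝ᵥ C.mulVec e))
    (happrox : ∀ e : Fin n → ℝ, ∃ ec : Fin m → ℝ,
      D.mulVec (e - P.mulVec ec) ⬝ᵥ (e - P.mulVec ec) ≤ σ₂ * (C.mulVec e ⬝ᵥ e))
    (Mhh : Matrix (Fin n) (Fin n) ℝ)
    (hM : Mhh = S * (1 - P * (Pᵀ * C * P)⁻¹ * Pᵀ * C)) :
    ∀ e : Fin n → ℝ,
      C.mulVec (Mhh.mulVec e) ⬝ᵥ Mhh.mulVec e ≤ (1 - σ₁ / σ₂) * (C.mulVec e ⬝ᵥ e) := by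
  intro e
  have hCsym : Cᵀ = C := hC.1
  have hσ₂ : 0 < σ₂ := lt_of_lt_of_le hσ₁ hσ
  set Q : Matrix (Fin m) (Fin m) ℝ := Pᵀ * C * P with hQdef
  have hQ : Q.PosDef := by
    rw [posDef_iff_dotProduct_mulVec]; constructor
    · show Qᵀ = Q
      rw [hQdef, transpose_mul, transpose_mul, transpose_transpose, hCsym]
      simp only [Matrix.mul_assoc]
    · intro x hx
      have hPx : P.mulVec x ≠ 0 := fun h => hx (hP (by simpa using h))
      have hpos := hC.dotProduct_mulVec_pos hPx
      have hrw : star x ⬝ᵥ Q.mulVec x = star (P.mulVec x) ⬝ᵥ C.mulVec (P.mulVec x) := by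
        simp only [star_trivial]
        rw [hQdef, ← mulVec_mulVec, ← mulVec_mulVec, dotProduct_mulVec, vecMul_transpose]
      rw [hrw]; exact hpos
  have hQinv : Q * Q⁻¹ = 1 := mul_nonsing_inv _ hQ.det_pos.ne'.isUnit
  set T : Matrix (Fin n) (Fin n) ℝ := 1 - P * Q⁻¹ * Pᵀ * C with hTdef
  have hPCT : Pᵀ * C * T = 0 := by
    have h1 : Pᵀ * C * (P * Q⁻¹ * Pᵀ * C) = Pᵀ * C := by
      calc Pᵀ * C * (P * Q⁻¹ * Pᵀ * C) = (Pᵀ * C * P) * (Q⁻¹ * (Pᵀ * C)) := by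
            simp only [Matrix.mul_assoc]
        _ = (Q * Q⁻¹) * (Pᵀ * C) := by rw [← hQdef]; simp only [Matrix.mul_assoc]
        _ = Pᵀ * C := by rw [hQinv, Matrix.one_mul]
    rw [hTdef, Matrix.mul_sub, Matrix.mul_one, h1, sub_self]
  set v : Fin n → ℝ := T.mulVec e with hvdef
  have hMe : Mhh.mulVec e = S.mulVec v := by
    rw [hM, hvdef, mulVec_mulVec]
  have horth : ∀ w : Fin m → ℝ, C.mulVec v ⬝ᵥ P.mulVec w = 0 := by
    intro w
    rw [dotProduct_mulVec, ← mulVec_transpose, hvdef, mulVec_mulVec, mulVec_mulVec,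
      hPCT, zero_mulVec, zero_dotProduct]
  have hEv : e = v + P.mulVec ((Q⁻¹ * Pᵀ * C).mulVec e) := by
    have hassoc : P * Q⁻¹ * Pᵀ * C = P * (Q⁻¹ * Pᵀ * C) := by simp only [Matrix.mul_assoc]
    rw [hvdef, hTdef, sub_mulVec, one_mulVec, mulVec_mulVec, ← hassoc]
    abel
  have hvle : C.mulVec v ⬝ᵥ v ≤ C.mulVec e ⬝ᵥ e := by
    set w := (Q⁻¹ * Pᵀ * C).mulVec e with hw
    have h1 : C.mulVec e ⬝ᵥ e = C.mulVec v ⬝ᵥ v + 2 * (C.mulVec v ⬝ᵥ P.mulVec w)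
        + C.mulVec (P.mulVec w) ⬝ᵥ P.mulVec w := by
      conv_lhs => rw [hEv]
      simp only [mulVec_add, add_dotProduct, dotProduct_add]
      have hsymm := dot_symm C hCsym (P.mulVec w) v
      linarith
    have h2 := horth w
    have h3 := psd_nonneg C hC.posSemidef (P.mulVec w)
    linarith
  have hdiag : ∀ i, 0 < C i i := by
    intro i
    have hne : (Pi.single i 1 : Fin n → ℝ) ≠ 0 := by
      intro h
      have h1 : (1 : ℝ) = 0 := by simpa using congrFun h i
      norm_num at h1
    have := hC.dotProduct_mulVec_pos hne
    simpa [mulVec_single, single_dotProduct, dotProduct_single] using this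
  have hDpd : D.PosDef := hD ▸ Matrix.PosDef.diagonal hdiag
  have hDinvpd : D⁻¹.PosDef := by
    have : D⁻¹ = Matrix.diagonal (fun i => (C i i)⁻¹) := by
      apply inv_eq_right_inv
      rw [hD, diagonal_mul_diagonal]
      convert diagonal_one with i
      exact mul_inv_cancel₀ (hdiag i).ne'
    rw [this]
    exact Matrix.PosDef.diagonal fun i => inv_pos.mpr (hdiag i)
  have hDDinv : ∀ z : Fin n → ℝ, D.mulVec (D⁻¹.mulVec z) = z := by
    intro z
    rw [mulVec_mulVec, mul_nonsing_inv _ hDpd.det_pos.ne'.isUnit, one_mulVec]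
  obtain ⟨ec, hec⟩ := happrox v
  set N2 := D⁻¹.mulVec (C.mulVec v) ⬝ᵥ C.mulVec v with hN2
  have hN2nn : 0 ≤ N2 := psd_nonneg D⁻¹ hDinvpd.posSemidef _
  have hcvv : 0 ≤ C.mulVec v ⬝ᵥ v := psd_nonneg C hC.posSemidef v
  have key : C.mulVec v ⬝ᵥ v ≤ σ₂ * N2 := by
    set x := D⁻¹.mulVec (C.mulVec v) with hx
    set y := v - P.mulVec ec with hy
    have h1 : D.mulVec x ⬝ᵥ y = C.mulVec v ⬝ᵥ v := by
      rw [hx, hDDinv, hy, dotProduct_sub, horth ec, sub_zero]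
    have h2 : D.mulVec x ⬝ᵥ x = N2 := by
      rw [hx, hDDinv, hN2, dotProduct_comm]
    have h3 := cs_lemma D hDpd.posSemidef x y
    rw [h1, h2] at h3
    have h4 : D.mulVec y ⬝ᵥ y ≤ σ₂ * (C.mulVec v ⬝ᵥ v) := hec
    rcases eq_or_lt_of_le hcvv with h | h
    · rw [← h]
      positivity
    · nlinarith [psd_nonneg D hDpd.posSemidef y]
  have hsm := hsmooth v
  rw [hMe]
  have hfrac : 0 ≤ 1 - σ₁ / σ₂ := by
    rw [sub_nonneg]
    exact div_le_one_of_le₀ hσ hσ₂.le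
  have hstep : σ₁ / σ₂ * (C.mulVec v ⬝ᵥ v) ≤ σ₁ * N2 := by
    have h5 := mul_le_mul_of_nonneg_left key (le_of_lt (div_pos hσ₁ hσ₂))
    calc σ₁ / σ₂ * (C.mulVec v ⬝ᵥ v) ≤ σ₁ / σ₂ * (σ₂ * N2) := h5
      _ = σ₁ * N2 := by field_simp
  calc C.mulVec (S.mulVec v) ⬝ᵥ S.mulVec v
      ≤ C.mulVec v ⬝ᵥ v - σ₁ * N2 := hsm
    _ ≤ C.mulVec v ⬝ᵥ v - σ₁ / σ₂ * (C.mulVec v ⬝ᵥ v) := by linarith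
    _ = (1 - σ₁ / σ₂) * (C.mulVec v ⬝ᵥ v) := by ring
    _ ≤ (1 - σ₁ / σ₂) * (C.mulVec e ⬝ᵥ e) := mul_le_mul_of_nonneg_left hvle hfrac
end

section
/- For β ∈ (1/2, 1), the ratio of the second to the first off-diagonal coefficients of the fractional stiffness matrix satisfies 0 < (4^(3-2β) - 4·3^(3-2β) + 6·2^(3-2β) - 4)/(3^(3-2β) - 2^(5-2β) + 7) < 1; i.e., |a_{1,3}| < |a_{1,2}|. -/
open Real Set

lemma c_lb : (157/100 : ℝ) < Real.logb 2 3 := by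
  rw [Real.lt_logb_iff_rpow_lt (by norm_num) (by norm_num)]
  have h : ((2:ℝ) ^ (157/100:ℝ)) ^ (100:ℕ) < (3:ℝ) ^ (100:ℕ) := by
    rw [← Real.rpow_natCast ((2:ℝ) ^ (157/100:ℝ)) 100, ← Real.rpow_mul (by norm_num)]
    rw [show (157/100:ℝ) * (100:ℕ) = ((157:ℕ):ℝ) by push_cast; ring, Real.rpow_natCast]
    norm_num
  exact lt_of_pow_lt_pow_left₀ 100 (by norm_num) h

lemma c_ub : Real.logb 2 3 < 8/5 := by
  rw [Real.logb_lt_iff_lt_rpow (by norm_num) (by norm_num)]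
  have h : (3:ℝ) ^ (5:ℕ) < ((2:ℝ) ^ (8/5:ℝ)) ^ (5:ℕ) := by
    rw [← Real.rpow_natCast ((2:ℝ) ^ (8/5:ℝ)) 5, ← Real.rpow_mul (by norm_num)]
    rw [show (8/5:ℝ) * (5:ℕ) = ((8:ℕ):ℝ) by push_cast; ring, Real.rpow_natCast]
    norm_num
  exact lt_of_pow_lt_pow_left₀ 5 (by positivity) h

lemma two_rpow_c : (2:ℝ) ^ Real.logb 2 3 = 3 :=
  Real.rpow_logb (by norm_num) (by norm_num) (by norm_num)

section
variable {c : ℝ}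

lemma four_rpow_c (h2c : (2:ℝ) ^ c = 3) : (4:ℝ) ^ c = 9 := by
  have : (4:ℝ) = 2 * 2 := by norm_num
  rw [this, Real.mul_rpow (by norm_num) (by norm_num), h2c]; norm_num

-- x^(c-2) > 9/16 for 0 < x < 4
lemma rpow_cm2_gt (h2c : (2:ℝ) ^ c = 3) (hc2 : c < 2) {x : ℝ} (hx0 : 0 < x) (hx4 : x < 4) :
    (9:ℝ)/16 < x ^ (c - 2) := by
  have h4 : (4:ℝ) ^ (c - 2) = 9/16 := by
    rw [Real.rpow_sub (by norm_num), four_rpow_c h2c]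
    norm_num [Real.rpow_two]
  calc (9:ℝ)/16 = (4:ℝ) ^ (c-2) := h4.symm
    _ < x ^ (c-2) := Real.rpow_lt_rpow_of_neg hx0 hx4 (by linarith)

lemma hasDerivAt_f (A B C : ℝ) {x : ℝ} (hx : x ≠ 0) :
    HasDerivAt (fun t : ℝ => A * t ^ c - t ^ 2 - B * t + C)
      (A * c * x ^ (c-1) - 2 * x - B) x := by
  have h1 := (Real.hasDerivAt_rpow_const (p := c) (Or.inl hx)).const_mul A
  have h2 : HasDerivAt (fun t : ℝ => t ^ 2) (2 * x) x := by
    simpa using hasDerivAt_pow 2 x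
  have h3 : HasDerivAt (fun t : ℝ => B * t) B x := by
    simpa using (hasDerivAt_id x).const_mul B
  have := ((h1.sub h2).sub h3).add_const C
  exact this.congr_deriv (by ring)

lemma hasDerivAt_f' (A B : ℝ) {x : ℝ} (hx : x ≠ 0) :
    HasDerivAt (fun t : ℝ => A * c * t ^ (c-1) - 2 * t - B)
      (A * c * (c-1) * x ^ (c-2) - 2) x := by
  have h1 := (Real.hasDerivAt_rpow_const (p := c-1) (Or.inl hx)).const_mul (A * c)
  have h2 : HasDerivAt (fun t : ℝ => 2 * t) 2 x := by
    simpa using (hasDerivAt_id x).const_mul 2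
  have := (h1.sub h2).sub_const B
  exact this.congr_deriv (by ring)

end

section
variable {c : ℝ}

lemma aux1 (hc1 : (157/100:ℝ) < c) (hc2 : c < 8/5) (h2c : (2:ℝ)^c = 3)
    {t : ℝ} (ht : t ∈ Set.Ioo (2:ℝ) 4) : 4 * t ^ c < t ^ 2 + 6 * t - 4 := by
  set g : ℝ → ℝ := fun t => 4 * t ^ c - t ^ 2 - 6 * t + 4 with hg
  have hderiv : ∀ x ∈ Set.Ioi (0:ℝ), deriv g x = 4 * c * x ^ (c-1) - 2 * x - 6 :=
    fun x hx => (hasDerivAt_f 4 6 4 (ne_of_gt hx)).deriv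
  have hrpow_cont : ContinuousOn (fun t : ℝ => t ^ c) (Set.Icc (2:ℝ) 4) := by
    apply ContinuousOn.rpow_const continuous_id.continuousOn
    intro x hx; exact Or.inl (by rintro rfl; exact absurd hx.1 (by norm_num))
  have hcont : ContinuousOn g (Set.Icc (2:ℝ) 4) := by
    exact (((continuousOn_const.mul hrpow_cont).sub
      ((continuous_pow 2).continuousOn)).sub
      (continuousOn_const.mul continuous_id.continuousOn)).add continuousOn_const
  have hconv : StrictConvexOn ℝ (Set.Icc (2:ℝ) 4) g := by
    apply strictConvexOn_of_deriv2_pos (convex_Icc 2 4) hcont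
    intro x hx
    rw [interior_Icc] at hx
    have hx0 : (0:ℝ) < x := by linarith [hx.1]
    have hev : deriv g =ᶠ[nhds x] (fun y => 4 * c * y ^ (c-1) - 2 * y - 6) :=
      Filter.eventuallyEq_of_mem (Ioi_mem_nhds hx0) hderiv
    have h2 : deriv^[2] g x = 4 * c * (c-1) * x ^ (c-2) - 2 := by
      show deriv (deriv g) x = _
      rw [hev.deriv_eq]
      exact (hasDerivAt_f' 4 6 (ne_of_gt hx0)).deriv
    rw [h2]
    have hu := rpow_cm2_gt h2c (by linarith) hx0 hx.2
    have hcc : (8949/10000:ℝ) < c*(c-1) := by nlinarith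
    nlinarith [mul_pos (sub_pos.2 hcc) (sub_pos.2 hu)]
  have h2m : (2:ℝ) ∈ Set.Icc (2:ℝ) 4 := by norm_num
  have h4m : (4:ℝ) ∈ Set.Icc (2:ℝ) 4 := by norm_num
  obtain ⟨ht1, ht2⟩ := ht
  have key := hconv.2 h2m h4m (by norm_num)
    (show (0:ℝ) < (4-t)/2 by linarith) (show (0:ℝ) < (t-2)/2 by linarith)
    (show (4-t)/2 + (t-2)/2 = 1 by ring)
  have harg : ((4-t)/2) • (2:ℝ) + ((t-2)/2) • (4:ℝ) = t := by
    simp only [smul_eq_mul]; ring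
  rw [harg] at key
  have hg2 : g 2 = 0 := by simp only [hg, h2c]; norm_num
  have hg4 : g 4 = 0 := by simp only [hg, four_rpow_c h2c]; norm_num
  rw [hg2, hg4] at key
  simp only [smul_eq_mul, mul_zero, add_zero, hg] at key
  linarith

lemma aux2 (hc1 : (157/100:ℝ) < c) (hc2 : c < 8/5) (h2c : (2:ℝ)^c = 3)
    {t : ℝ} (ht : t ∈ Set.Ioo (2:ℝ) 4) : t ^ 2 + 10 * t - 11 < 5 * t ^ c := by
  set g : ℝ → ℝ := fun t => 5 * t ^ c - t ^ 2 - 10 * t + 11 with hg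
  set h : ℝ → ℝ := fun y => 5 * c * y ^ (c-1) - 2 * y - 10 with hh
  have h4c1 : (4:ℝ) ^ (c-1) = 9/4 := by
    rw [Real.rpow_sub (by norm_num), four_rpow_c h2c, Real.rpow_one]
  have hhc : ContinuousOn h (Set.Icc (2:ℝ) 4) := by
    apply ContinuousOn.sub
    apply ContinuousOn.sub
    · apply ContinuousOn.mul continuousOn_const
      apply ContinuousOn.rpow_const continuous_id.continuousOn
      intro x hx; exact Or.inl (by rintro rfl; exact absurd hx.1 (by norm_num))
    · exact continuousOn_const.mul continuous_id.continuousOn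
    · exact continuousOn_const
  have hmono : StrictMonoOn h (Set.Icc (2:ℝ) 4) := by
    apply strictMonoOn_of_deriv_pos (convex_Icc 2 4) hhc
    intro x hx
    rw [interior_Icc] at hx
    have hx0 : (0:ℝ) < x := by linarith [hx.1]
    rw [hh, (hasDerivAt_f' 5 10 (ne_of_gt hx0)).deriv]
    have hu := rpow_cm2_gt h2c (by linarith) hx0 hx.2
    have hcc : (8949/10000:ℝ) < c*(c-1) := by nlinarith
    nlinarith [mul_pos (sub_pos.2 hcc) (sub_pos.2 hu)]
  have hrpow_cont : ContinuousOn (fun t : ℝ => t ^ c) (Set.Icc (2:ℝ) 4) := by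
    apply ContinuousOn.rpow_const continuous_id.continuousOn
    intro x hx; exact Or.inl (by rintro rfl; exact absurd hx.1 (by norm_num))
  have hcont : ContinuousOn g (Set.Icc (2:ℝ) 4) := by
    exact (((continuousOn_const.mul hrpow_cont).sub
      ((continuous_pow 2).continuousOn)).sub
      (continuousOn_const.mul continuous_id.continuousOn)).add continuousOn_const
  have hanti : StrictAntiOn g (Set.Icc (2:ℝ) 4) := by
    apply strictAntiOn_of_deriv_neg (convex_Icc 2 4) hcont
    intro x hx
    rw [interior_Icc] at hx
    have hx0 : (0:ℝ) < x := by linarith [hx.1]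
    rw [hg, (hasDerivAt_f 5 10 11 (ne_of_gt hx0)).deriv]
    have hx4 : h x < h 4 := hmono (Set.mem_Icc.2 ⟨le_of_lt hx.1, le_of_lt hx.2⟩)
      (Set.mem_Icc.2 (by norm_num)) hx.2
    have hh4 : h 4 = 5 * c * (9/4) - 18 := by rw [hh]; simp only [h4c1]; ring
    rw [hh4] at hx4
    simp only [hh] at hx4
    linarith
  obtain ⟨ht1, ht2⟩ := ht
  have key := hanti (Set.mem_Icc.2 ⟨le_of_lt ht1, le_of_lt ht2⟩)
    (Set.mem_Icc.2 (by norm_num)) ht2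
  have hg4 : g 4 = 0 := by simp only [hg, four_rpow_c h2c]; norm_num
  rw [hg4] at key
  simp only [hg] at key
  linarith

end

/-- For β ∈ (1/2,1), the ratio of the second to the first off-diagonal stiffness
coefficients satisfies 0 < (4^(3-2β) - 4·3^(3-2β) + 6·2^(3-2β) - 4)/(3^(3-2β) - 2^(5-2β) + 7) < 1. -/
theorem stmt_19 (β : ℝ) (hβ : β ∈ Set.Ioo (1/2 : ℝ) 1) :
    0 < ((4 : ℝ) ^ (3 - 2 * β) - 4 * (3 : ℝ) ^ (3 - 2 * β) + 6 * (2 : ℝ) ^ (3 - 2 * β) - 4) /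
        ((3 : ℝ) ^ (3 - 2 * β) - (2 : ℝ) ^ (5 - 2 * β) + 7) ∧
    ((4 : ℝ) ^ (3 - 2 * β) - 4 * (3 : ℝ) ^ (3 - 2 * β) + 6 * (2 : ℝ) ^ (3 - 2 * β) - 4) /
        ((3 : ℝ) ^ (3 - 2 * β) - (2 : ℝ) ^ (5 - 2 * β) + 7) < 1 := by
  obtain ⟨hβ1, hβ2⟩ := hβ
  set s : ℝ := 3 - 2 * β with hs
  have hs1 : 1 < s := by rw [hs]; linarith
  have hs2 : s < 2 := by rw [hs]; linarith
  set c : ℝ := Real.logb 2 3 with hc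
  have hc1 : (157/100:ℝ) < c := c_lb
  have hc2 : c < 8/5 := c_ub
  have h2c : (2:ℝ) ^ c = 3 := two_rpow_c
  set t : ℝ := (2:ℝ) ^ s with htdef
  have ht2 : 2 < t := by
    calc (2:ℝ) = 2 ^ (1:ℝ) := (Real.rpow_one 2).symm
    _ < 2 ^ s := Real.rpow_lt_rpow_of_exponent_lt (by norm_num) hs1
  have ht4 : t < 4 := by
    calc t < 2 ^ (2:ℝ) := Real.rpow_lt_rpow_of_exponent_lt (by norm_num) hs2
    _ = 4 := by rw [show (2:ℝ) = ((2:ℕ):ℝ) by norm_num, Real.rpow_natCast]; norm_num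
  have ht : t ∈ Set.Ioo (2:ℝ) 4 := ⟨ht2, ht4⟩
  have h3s : (3:ℝ) ^ s = t ^ c := by
    show (3:ℝ) ^ s = ((2:ℝ) ^ s) ^ c
    rw [← Real.rpow_mul (by norm_num : (0:ℝ) ≤ 2), mul_comm,
        Real.rpow_mul (by norm_num : (0:ℝ) ≤ 2), h2c]
  have h4s : (4:ℝ) ^ s = t ^ 2 := by
    rw [show (4:ℝ) = 2 * 2 by norm_num, Real.mul_rpow (by norm_num) (by norm_num), sq, htdef]
  have h22 : (2:ℝ) ^ (2:ℝ) = 4 := by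
    rw [show (2:ℝ) = ((2:ℕ):ℝ) by norm_num, Real.rpow_natCast]; norm_num
  have h5s : (2:ℝ) ^ (5 - 2*β) = 4 * t := by
    rw [show (5 - 2*β : ℝ) = s + 2 by rw [hs]; ring, Real.rpow_add (by norm_num), h22, htdef]
    ring
  rw [h3s, h4s, h5s]
  have hN : 0 < t^2 - 4*t^c + 6*t - 4 := by
    have := aux1 hc1 hc2 h2c ht; linarith
  have hDN : t^2 + 10*t - 11 < 5*t^c := aux2 hc1 hc2 h2c ht
  have hD : 0 < t^c - 4*t + 7 := by linarith
  constructor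
  · exact div_pos (by linarith) (by linarith)
  · rw [div_lt_one (by linarith)]
    linarith
end
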